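/- For any nonempty graph F that is a disjoint union of s copies of a graph F₁ with k edges, if (F₁, H) is (p₁,p₂)-common then (s·F₁, H) is (p₁,p₂)-common, for any positive integer s. -/

import Mathlib

open MeasureTheory Finset

/-- The uniform measure on the unit interval `[0,1]`, as a measure on `ℝ`. -/
noncomputable def unitM : Measure ℝ := volume.restrict (Set.Icc 0 1)

instance : SigmaFinite unitM := by unfold unitM; infer_instance

/-- Value of a symmetric two-variable function on an unordered pair of vertices. -/
noncomputable def symEdge {α : Type*} (W : ℝ → ℝ → ℝ) (x : α → ℝ) : Sym2 α → ℝ :=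
  Sym2.lift ⟨fun u v => (W (x u) (x v) + W (x v) (x u)) / 2, fun u v => by ring⟩

open Classical in
/-- Homomorphism density of a finite simple graph in a kernel. -/
noncomputable def homDensity {V : Type*} [Fintype V] (G : SimpleGraph V)
    (W : ℝ → ℝ → ℝ) : ℝ :=
  ∫ x : V → ℝ, ∏ e ∈ G.edgeFinset, symEdge W x e ∂(Measure.pi fun _ => unitM)

/-- Number of edges of a graph. -/
noncomputable def eCount {V : Type*} (G : SimpleGraph V) : ℕ := G.edgeSet.ncard

def IsSymm2 (W : ℝ → ℝ → ℝ) : Prop := ∀ x y, W x y = W y x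

/-- A kernel: bounded, symmetric, measurable. -/
def IsKernel (W : ℝ → ℝ → ℝ) : Prop :=
  Measurable (Function.uncurry W) ∧ IsSymm2 W ∧ ∃ C, ∀ x y, |W x y| ≤ C

/-- A graphon: symmetric measurable with values in `[0,1]`. -/
def IsGraphon (W : ℝ → ℝ → ℝ) : Prop :=
  Measurable (Function.uncurry W) ∧ IsSymm2 W ∧ ∀ x y, W x y ∈ Set.Icc (0:ℝ) 1

/-- The pair `(G₁, G₂)` is `(p₁,p₂)`-common. -/
def IsCommonPair {V₁ V₂ : Type*} [Fintype V₁] [Fintype V₂]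
    (G₁ : SimpleGraph V₁) (G₂ : SimpleGraph V₂) (p₁ p₂ : ℝ) : Prop :=
  ∀ W₁ W₂ : ℝ → ℝ → ℝ, IsGraphon W₁ → IsGraphon W₂ → (∀ x y, W₁ x y + W₂ x y = 1) →
    homDensity G₁ W₁ / (eCount G₁ * p₁ ^ (eCount G₁ - 1))
      + homDensity G₂ W₂ / (eCount G₂ * p₂ ^ (eCount G₂ - 1))
      ≥ p₁ / eCount G₁ + p₂ / eCount G₂

/-- The disjoint union of the graphs `F 0, …, F (s-1)` (all on vertex type `V`),
realized on the vertex type `V × Fin s`. -/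
def unionGraph {V : Type*} {s : ℕ} (F : Fin s → SimpleGraph V) :
    SimpleGraph (V × Fin s) where
  Adj a b := a.2 = b.2 ∧ (F a.2).Adj a.1 b.1
  symm := ⟨by
    rintro ⟨u, i⟩ ⟨v, j⟩ ⟨h, hadj⟩
    cases h
    exact ⟨rfl, hadj.symm⟩⟩
  loopless := ⟨by
    rintro ⟨u, i⟩ ⟨-, h⟩
    exact (F i).irrefl h⟩

-- auxiliary lemmas
lemma symEdge_map {α β : Type*} (W : ℝ → ℝ → ℝ) (x : β → ℝ) (f : α → β) (e : Sym2 α) :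
    symEdge W x (e.map f) = symEdge W (x ∘ f) e := by
  induction e using Sym2.ind with
  | _ u v => simp [symEdge]

lemma measurable_symEdge {α : Type*} {W : ℝ → ℝ → ℝ}
    (hW : Measurable (Function.uncurry W)) (e : Sym2 α) :
    Measurable fun x : α → ℝ => symEdge W x e := by
  induction e using Sym2.ind with
  | _ u v =>
    simp only [symEdge, Sym2.lift_mk]
    have h1 : Measurable fun x : α → ℝ => W (x u) (x v) := by
      have := hW.comp (f := fun x : α → ℝ => (x u, x v))
        ((measurable_pi_apply u).prodMk (measurable_pi_apply v))
      exact this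
    have h2 : Measurable fun x : α → ℝ => W (x v) (x u) := by
      have := hW.comp (f := fun x : α → ℝ => (x v, x u))
        ((measurable_pi_apply v).prodMk (measurable_pi_apply u))
      exact this
    exact (h1.add h2).div_const 2

lemma measurePreserving_curryT {V : Type*} [Fintype V] (s : ℕ) :
    MeasurePreserving (fun (y : Fin s → V → ℝ) (p : V × Fin s) => y p.2 p.1)
      (Measure.pi fun _ : Fin s => (Measure.pi fun _ : V => unitM))
      (Measure.pi fun _ : V × Fin s => unitM) := by
  have hmeas : Measurable fun (y : Fin s → V → ℝ) (p : V × Fin s) => y p.2 p.1 :=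
    measurable_pi_lambda _ fun p => (measurable_pi_apply p.1).comp (measurable_pi_apply p.2)
  refine ⟨hmeas, ?_⟩
  refine (Measure.pi_eq fun t ht => ?_).symm
  rw [Measure.map_apply hmeas (MeasurableSet.univ_pi ht)]
  have hpre : (fun (y : Fin s → V → ℝ) (p : V × Fin s) => y p.2 p.1) ⁻¹' (Set.univ.pi t)
      = Set.univ.pi fun i : Fin s => Set.univ.pi fun v : V => t (v, i) := by
    ext y
    simp only [Set.mem_preimage, Set.mem_pi, Set.mem_univ, true_implies]
    exact ⟨fun h i v => h (v, i), fun h p => h p.2 p.1⟩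
  rw [hpre, Measure.pi_pi]
  simp_rw [Measure.pi_pi]
  rw [Fintype.prod_prod_type]
  exact Finset.prod_comm

open Classical in
lemma unionGraph_edgeFinset {V : Type*} [Fintype V] {s : ℕ} (F : Fin s → SimpleGraph V) :
    (unionGraph F).edgeFinset =
      univ.biUnion (fun i => ((F i).edgeFinset).image (Sym2.map (fun v => (v, i)))) := by
  ext e
  induction e using Sym2.ind with
  | _ a b =>
    obtain ⟨u, i⟩ := a
    obtain ⟨v, j⟩ := b
    simp only [SimpleGraph.mem_edgeFinset, Finset.mem_biUnion, Finset.mem_image, mem_univ,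
      true_and, SimpleGraph.mem_edgeSet]
    constructor
    · rintro ⟨h, hadj⟩
      cases h
      exact ⟨i, s(u, v), by simpa using hadj, by simp⟩
    · rintro ⟨i', e', he', heq⟩
      induction e' using Sym2.ind with
      | _ u' v' =>
        rw [Sym2.map_pair_eq, Sym2.eq_iff] at heq
        rcases heq with ⟨h1, h2⟩ | ⟨h1, h2⟩ <;>
          · obtain ⟨rfl, rfl⟩ := Prod.mk.inj h1
            obtain ⟨rfl, rfl⟩ := Prod.mk.inj h2
            first
            | exact ⟨rfl, he'⟩
            | exact ⟨rfl, he'.symm⟩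

lemma snd_mk_injective {V : Type*} {s : ℕ} (i : Fin s) :
    Function.Injective (fun v : V => (v, i)) := fun a b h => congrArg Prod.fst h

open Classical in
lemma unionGraph_edge_disjoint {V : Type*} [Fintype V] {s : ℕ} (F : Fin s → SimpleGraph V) :
    ∀ i ∈ (univ : Finset (Fin s)), ∀ j ∈ univ, i ≠ j →
      Disjoint (((F i).edgeFinset).image (Sym2.map (fun v : V => (v, i))))
        (((F j).edgeFinset).image (Sym2.map (fun v : V => (v, j)))) := by
  intro i _ j _ hij
  rw [Finset.disjoint_left]
  rintro e he₁ he₂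
  simp only [Finset.mem_image] at he₁ he₂
  obtain ⟨e₁, -, rfl⟩ := he₁
  obtain ⟨e₂, -, heq⟩ := he₂
  induction e₁ using Sym2.ind with
  | _ u v =>
    induction e₂ using Sym2.ind with
    | _ u' v' =>
      rw [Sym2.map_pair_eq, Sym2.map_pair_eq, Sym2.eq_iff] at heq
      rcases heq with ⟨h1, -⟩ | ⟨h1, -⟩ <;>
        exact hij ((Prod.mk.inj h1).2.symm)

open Classical in
lemma homDensity_unionGraph {V : Type*} [Fintype V] {s : ℕ} (F : Fin s → SimpleGraph V)
    {W : ℝ → ℝ → ℝ} (hW : Measurable (Function.uncurry W)) :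
    homDensity (unionGraph F) W = ∏ i, homDensity (F i) W := by
  classical
  have hT := measurePreserving_curryT (V := V) s
  have hgmeas : Measurable fun x : V × Fin s → ℝ =>
      ∏ e ∈ (unionGraph F).edgeFinset, symEdge W x e :=
    Finset.measurable_prod _ fun e _ => measurable_symEdge hW e
  rw [homDensity, ← hT.map_eq,
    integral_map hT.measurable.aemeasurable hgmeas.aestronglyMeasurable]
  have hprod : ∀ y : Fin s → V → ℝ,
      (∏ e ∈ (unionGraph F).edgeFinset,
        symEdge W (fun p : V × Fin s => y p.2 p.1) e)
      = ∏ i, ∏ e ∈ (F i).edgeFinset, symEdge W (y i) e := by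
    intro y
    rw [unionGraph_edgeFinset, Finset.prod_biUnion (unionGraph_edge_disjoint F)]
    refine Finset.prod_congr rfl fun i _ => ?_
    rw [Finset.prod_image (fun a _ b _ h =>
      Sym2.map.injective (snd_mk_injective i) h)]
    refine Finset.prod_congr rfl fun e _ => ?_
    rw [symEdge_map]
    rfl
  simp_rw [hprod]
  letI : MeasureSpace (V → ℝ) := ⟨Measure.pi fun _ => unitM⟩
  haveI : SigmaFinite (volume : Measure (V → ℝ)) :=
    inferInstanceAs (SigmaFinite (Measure.pi fun _ : V => unitM))
  have := MeasureTheory.integral_fintype_prod_eq_prod (𝕜 := ℝ) (ι := Fin s)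
    (fun i (y : V → ℝ) => ∏ e ∈ (F i).edgeFinset, symEdge W y e)
    (μ := fun _ => Measure.pi fun _ : V => unitM)
  exact this

open Classical in
lemma homDensity_nonneg {V : Type*} [Fintype V] (G : SimpleGraph V)
    {W : ℝ → ℝ → ℝ} (hW : ∀ x y, 0 ≤ W x y) : 0 ≤ homDensity G W := by
  refine integral_nonneg fun x => Finset.prod_nonneg fun e _ => ?_
  induction e using Sym2.ind with
  | _ u v =>
    simp only [symEdge, Sym2.lift_mk]
    have := hW (x u) (x v)
    have := hW (x v) (x u)
    positivity

open Classical in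
lemma unionGraph_eCount {V : Type*} [Fintype V] {s : ℕ} (F : Fin s → SimpleGraph V) :
    (unionGraph F).edgeSet.ncard = ∑ i, (F i).edgeSet.ncard := by
  classical
  have h1 : (unionGraph F).edgeSet.ncard = (unionGraph F).edgeFinset.card := by
    rw [Set.ncard_eq_toFinset_card']
    convert rfl
    ext; simp
  rw [h1, unionGraph_edgeFinset, Finset.card_biUnion (unionGraph_edge_disjoint F)]
  refine Finset.sum_congr rfl fun i _ => ?_
  rw [Finset.card_image_of_injective _ (Sym2.map.injective (snd_mk_injective i))]
  rw [Set.ncard_eq_toFinset_card']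
  convert rfl
  ext; simp

/-- If `F₁` is a nonempty graph with `k` edges and `(F₁, H)` is `(p₁,p₂)`-common,
then `(s·F₁, H)` is `(p₁,p₂)`-common for every positive integer `s`, where `s·F₁`
is the disjoint union of `s` copies of `F₁`. -/
theorem common_copies_union {V₁ V₂ : Type*} [Fintype V₁] [Fintype V₂]
    (s k : ℕ) (hs : 1 ≤ s) (hk : 1 ≤ k)
    (F₁ : SimpleGraph V₁) (H : SimpleGraph V₂)
    (hH : 1 ≤ eCount H) (hF : eCount F₁ = k)
    (p₁ p₂ : ℝ) (hp₁ : p₁ ∈ Set.Ioo (0:ℝ) 1) (hp₂ : p₂ ∈ Set.Ioo (0:ℝ) 1)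
    (hsum : p₁ + p₂ = 1)
    (hcommon : IsCommonPair F₁ H p₁ p₂) :
    IsCommonPair (unionGraph (fun _ : Fin s => F₁)) H p₁ p₂ := by
  intro W₁ W₂ hW₁ hW₂ h12
  have key := hcommon W₁ W₂ hW₁ hW₂ h12
  have hED : eCount (unionGraph (fun _ : Fin s => F₁)) = s * k := by
    show (unionGraph _).edgeSet.ncard = s * k
    rw [unionGraph_eCount]
    have : F₁.edgeSet.ncard = k := hF
    simp [this, Finset.sum_const, mul_comm]
  have hHD : homDensity (unionGraph (fun _ : Fin s => F₁)) W₁ = homDensity F₁ W₁ ^ s := by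
    rw [homDensity_unionGraph _ hW₁.1, Finset.prod_const, Finset.card_univ, Fintype.card_fin]
  rw [hED, hHD]
  rw [hF] at key
  obtain ⟨hp₁0, hp₁1⟩ := hp₁
  set a := homDensity F₁ W₁ with ha
  have ha0 : 0 ≤ a := homDensity_nonneg _ (fun x y => (hW₁.2.2 x y).1)
  have hEn : 0 < eCount H := hH
  have hE0 : (0:ℝ) < (eCount H : ℝ) := by exact_mod_cast hEn
  have hkR : (0:ℝ) < (k:ℝ) := by exact_mod_cast hk
  have hsR : (0:ℝ) < (s:ℝ) := by exact_mod_cast hs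
  have hp₁ne : p₁ ≠ 0 := ne_of_gt hp₁0
  have hkne : (k:ℝ) ≠ 0 := ne_of_gt hkR
  have hsne : (s:ℝ) ≠ 0 := ne_of_gt hsR
  set u := a / p₁ ^ k with hu
  have hu0 : 0 ≤ u := div_nonneg ha0 (by positivity)
  have hau : a = u * p₁ ^ k := by rw [hu]; field_simp
  have h1 : a / ((k:ℝ) * p₁ ^ (k - 1)) = u * p₁ / k := by
    rw [hau]
    have hk' : k - 1 + 1 = k := Nat.succ_pred_eq_of_pos hk
    rw [← hk', pow_succ]
    field_simp
    ring
    rw [Nat.add_sub_cancel_left]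
  have hskpos : 0 < s * k := Nat.mul_pos hs hk
  have h2 : a ^ s / ((↑(s*k) : ℝ) * p₁ ^ (s*k - 1)) = u ^ s * p₁ / ((s:ℝ)*(k:ℝ)) := by
    rw [hau, mul_pow, ← pow_mul]
    have hsk1 : s*k - 1 + 1 = s*k := Nat.succ_pred_eq_of_pos hskpos
    have hpw : p₁ ^ (k*s) = p₁ ^ (s*k-1) * p₁ := by
      rw [← pow_succ, hsk1, mul_comm k s]
    rw [hpw]
    push_cast
    field_simp
  rw [h1] at key
  rw [h2]
  have hbern : 1 + (s:ℝ) * (u - 1) ≤ u ^ s := by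
    have h := one_add_mul_le_pow (show (-2:ℝ) ≤ u - 1 by linarith) s
    rw [show (1:ℝ) + (u - 1) = u by ring] at h
    exact h
  have hfr : 0 ≤ p₁ / ((s:ℝ)*(k:ℝ)) := by positivity
  have hmain : 0 ≤ p₁ / ((s:ℝ)*(k:ℝ)) * (u ^ s - 1 - (s:ℝ)*(u - 1)) :=
    mul_nonneg hfr (by linarith)
  have hexp : u ^ s * p₁ / ((s:ℝ)*(k:ℝ)) - p₁ / ((s:ℝ)*(k:ℝ)) - (u * p₁ / (k:ℝ) - p₁ / (k:ℝ))
      = p₁ / ((s:ℝ)*(k:ℝ)) * (u ^ s - 1 - (s:ℝ)*(u - 1)) := by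
    field_simp
  have hgoalcast : ((↑(s*k) : ℝ)) = (s:ℝ)*(k:ℝ) := by push_cast; ring
  rw [hgoalcast]
  linarith [key, hmain, hexp]
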